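/- For every integer n ≥ 1, the sum over j = 0, 1, …, 2n+1 of the rational numbers ((−1)^{j−n−1} (n+1) / (2j−2n−1)) · C(2n+1, n) · C(2n+1, j) equals 2^{4n+1}. -/

import Mathlib

lemma key_partial_fractions (m : ℕ) : ∀ (x : ℚ), (∀ i ∈ Finset.range (m+1), x + i ≠ 0) →
    ∑ j ∈ Finset.range (m+1), (-1)^j * (m.choose j : ℚ) / (x + j)
      = (m.factorial : ℚ) / ∏ i ∈ Finset.range (m+1), (x + i) := by
  induction m with
  | zero => intro x hx; simp
  | succ m ih =>
    intro x hx
    have hx0 : x ≠ 0 := by simpa using hx 0 (by simp)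
    have h1 : ∀ i ∈ Finset.range (m+1), x + i ≠ 0 := fun i hi => hx i (by
      simp only [Finset.mem_range] at hi ⊢; omega)
    have h2 : ∀ i ∈ Finset.range (m+1), (x+1) + i ≠ 0 := by
      intro i hi heq
      have := hx (i+1) (by simp only [Finset.mem_range] at hi ⊢; omega)
      apply this; push_cast; linarith
    have hxm : x + ((m:ℚ)+1) ≠ 0 := by
      have := hx (m+1) (by simp)
      intro h; apply this; push_cast; linarith
    have step : ∑ j ∈ Finset.range (m+2), (-1)^j * ((m+1).choose j : ℚ) / (x + j)
        = (∑ j ∈ Finset.range (m+1), (-1)^j * (m.choose j : ℚ) / (x + j))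
          - ∑ j ∈ Finset.range (m+1), (-1)^j * (m.choose j : ℚ) / ((x+1) + j) := by
      rw [Finset.sum_range_succ' (fun j => (-1)^j * ((m+1).choose j : ℚ) / (x + j)) (m+1)]
      push_cast
      have e1 : ∀ j ∈ Finset.range (m+1),
          (-1:ℚ)^(j+1) * ((m+1).choose (j+1) : ℚ) / (x + ((j:ℚ)+1))
          = (-1)^(j+1) * (m.choose (j+1) : ℚ) / (x + ((j:ℚ)+1))
            - (-1)^j * (m.choose j : ℚ) / ((x+1) + j) := by
        intro j hj
        rw [Nat.choose_succ_succ]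
        have hne : (x+1) + (j:ℚ) ≠ 0 := h2 j hj
        have hne' : x + ((j:ℚ)+1) ≠ 0 := by intro h; apply hne; linarith
        push_cast
        field_simp
        ring
      rw [Finset.sum_congr rfl e1, Finset.sum_sub_distrib]
      have e2 : ∑ j ∈ Finset.range (m+1), (-1:ℚ)^(j+1) * (m.choose (j+1) : ℚ) / (x + ((j:ℚ)+1))
          + 1 / x
          = ∑ j ∈ Finset.range (m+1), (-1)^j * (m.choose j : ℚ) / (x + j) := by
        rw [Finset.sum_range_succ' (fun j => (-1)^j * (m.choose j : ℚ) / (x + j)) m]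
        push_cast
        rw [Finset.sum_range_succ]
        simp [Nat.choose_succ_self]
      simp only [pow_zero, Nat.choose_zero_right, Nat.cast_one, one_mul, add_zero] at e2 ⊢
      linarith [e2]
    rw [step, ih x h1, ih (x+1) h2]
    have hP : (∏ i ∈ Finset.range (m+1), (x + i)) ≠ 0 := Finset.prod_ne_zero_iff.2 h1
    have hQ : (∏ i ∈ Finset.range (m+1), ((x+1) + i)) ≠ 0 := Finset.prod_ne_zero_iff.2 h2
    have hR1 : ∏ i ∈ Finset.range (m+2), (x + i)
        = (∏ i ∈ Finset.range (m+1), (x + i)) * (x + ((m:ℚ)+1)) := by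
      rw [Finset.prod_range_succ]; push_cast; ring_nf
    have hR2 : ∏ i ∈ Finset.range (m+2), (x + i)
        = x * ∏ i ∈ Finset.range (m+1), ((x+1) + i) := by
      rw [Finset.prod_range_succ' (fun i => x + (i:ℚ)) (m+1)]
      simp only [Nat.cast_zero, add_zero]
      rw [mul_comm]
      congr 1
      exact Finset.prod_congr rfl (fun i _ => by push_cast; ring)
    rw [hR1]
    have hfac : ((m+1).factorial : ℚ) = ((m:ℚ)+1) * m.factorial := by
      rw [Nat.factorial_succ]; push_cast; ring
    push_cast [hfac]
    rw [div_sub_div _ _ hP hQ, div_eq_div_iff (mul_ne_zero hP hQ) (mul_ne_zero hP hxm)]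
    have hkey : x * (∏ i ∈ Finset.range (m+1), ((x+1) + i))
        = (∏ i ∈ Finset.range (m+1), (x + i)) * (x + ((m:ℚ)+1)) := by
      rw [← hR2, hR1]
    linear_combination ((m.factorial : ℚ) * ∏ i ∈ Finset.range (m+1), (x + i)) * hkey


lemma podd_fact (n : ℕ) :
    (∏ k ∈ Finset.range (n+1), (2*k+1)) * (2^n * n.factorial) = (2*n+1).factorial := by
  induction n with
  | zero => simp
  | succ n ih =>
    rw [Finset.prod_range_succ]
    have h : (2*(n+1)+1).factorial = (2*(n+1)+1) * ((2*n+2) * (2*n+1).factorial) := by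
      rw [show 2*(n+1)+1 = (2*n+2)+1 from by ring, Nat.factorial_succ,
        show 2*n+2 = (2*n+1)+1 from by ring, Nat.factorial_succ]
    rw [h, ← ih, Nat.factorial_succ]
    ring

lemma prod_odd_split (n : ℕ) :
    ∏ i ∈ Finset.range (2*n+2), (2*(i:ℚ) - 2*n - 1)
      = (-1)^(n+1) * (∏ k ∈ Finset.range (n+1), (2*(k:ℚ)+1))^2 := by
  rw [show 2*n+2 = (n+1)+(n+1) from by ring, Finset.prod_range_add]
  have h2 : ∏ i ∈ Finset.range (n+1), (2*((((n+1)+i : ℕ)):ℚ) - 2*n - 1)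
      = ∏ k ∈ Finset.range (n+1), (2*(k:ℚ)+1) := by
    refine Finset.prod_congr rfl fun i _ => ?_
    push_cast; ring
  have h1 : ∏ i ∈ Finset.range (n+1), (2*((i:ℕ):ℚ) - 2*n - 1)
      = (-1)^(n+1) * ∏ k ∈ Finset.range (n+1), (2*(k:ℚ)+1) := by
    rw [← Finset.prod_range_reflect (fun i => 2*((i:ℕ):ℚ) - 2*n - 1) (n+1)]
    have : ∀ j ∈ Finset.range (n+1),
        (2*(((n+1-1-j : ℕ)):ℚ) - 2*n - 1) = (-1) * (2*(j:ℚ)+1) := by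
      intro j hj
      simp only [Finset.mem_range] at hj
      have hj' : j ≤ n := by omega
      have : ((n + 1 - 1 - j : ℕ) : ℚ) = (n:ℚ) - j := by
        have : n + 1 - 1 - j = n - j := by omega
        rw [this, Nat.cast_sub hj']
      rw [this]; ring
    rw [Finset.prod_congr rfl this, Finset.prod_mul_distrib, Finset.prod_const,
      Finset.card_range]
  rw [h1, h2]; ring

theorem sum_deslauriers_dubuc_coeffs (n : ℕ) (hn : 1 ≤ n) :
    ∑ j ∈ Finset.range (2 * n + 2),
      ((-1 : ℚ) ^ ((j : ℤ) - n - 1) * (n + 1) / ((2 * (j : ℤ) - 2 * n - 1 : ℤ) : ℚ)) *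
        (Nat.choose (2 * n + 1) n : ℚ) * (Nat.choose (2 * n + 1) j : ℚ)
      = 2 ^ (4 * n + 1) := by
  set x : ℚ := (-(2*(n:ℚ)) - 1) / 2 with hxdef
  have hne : ∀ i ∈ Finset.range (2*n+2), x + (i:ℚ) ≠ 0 := by
    intro i _ h
    have h2 : (2*(i:ℚ) - 2*n - 1) = 0 := by
      rw [hxdef] at h; linarith
    have h3 : (2*(i:ℤ) - 2*n - 1 : ℤ) = 0 := by exact_mod_cast h2
    omega
  set K : ℚ := (-1:ℚ)^(n+1) * ((n:ℚ)+1) * ((2*n+1).choose n : ℚ) / 2 with hKdef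
  have hterm : ∀ j ∈ Finset.range (2*n+2),
      ((-1 : ℚ) ^ ((j : ℤ) - n - 1) * (n + 1) / ((2 * (j : ℤ) - 2 * n - 1 : ℤ) : ℚ)) *
        (Nat.choose (2 * n + 1) n : ℚ) * (Nat.choose (2 * n + 1) j : ℚ)
      = K * ((-1)^j * ((2*n+1).choose j : ℚ) / (x + j)) := by
    intro j hj
    have hz : (-1:ℚ)^((j:ℤ) - n - 1) = (-1)^j * (-1)^(n+1) := by
      rw [show (j:ℤ) - n - 1 = (j:ℤ) - ((n+1 : ℕ) : ℤ) from by push_cast; ring,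
        zpow_sub₀ (by norm_num : (-1:ℚ) ≠ 0), zpow_natCast, zpow_natCast]
      rcases neg_one_pow_eq_or ℚ (n+1) with h|h <;> rw [h] <;> ring
    have hden : ((2 * (j : ℤ) - 2 * n - 1 : ℤ) : ℚ) = 2 * (x + j) := by
      rw [hxdef]; push_cast; ring
    have hxj : x + (j:ℚ) ≠ 0 := hne j hj
    rw [hz, hden, hKdef]
    field_simp
  rw [Finset.sum_congr rfl hterm, ← Finset.mul_sum]
  have hrange : (2*n+2) = (2*n+1)+1 := by ring
  have hne' : ∀ i ∈ Finset.range ((2*n+1)+1), x + (i:ℚ) ≠ 0 := by rw [← hrange]; exact hne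
  have hsum := key_partial_fractions (2*n+1) x hne'
  rw [hrange, hsum, ← hrange]
  -- compute the product
  have hprod : ∏ i ∈ Finset.range (2*n+2), (x + (i:ℚ))
      = (∏ i ∈ Finset.range (2*n+2), (2*(i:ℚ) - 2*n - 1)) / 2^(2*n+2) := by
    have : ∀ i ∈ Finset.range (2*n+2), x + (i:ℚ) = (2*(i:ℚ) - 2*n - 1) / 2 := by
      intro i _; rw [hxdef]; ring
    rw [Finset.prod_congr rfl this, Finset.prod_div_distrib, Finset.prod_const,
      Finset.card_range]
  set Qn : ℕ := ∏ k ∈ Finset.range (n+1), (2*k+1) with hQdef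
  have hcastQ : ∏ k ∈ Finset.range (n+1), (2*(k:ℚ)+1) = (Qn:ℚ) := by
    rw [hQdef]; push_cast; rfl
  rw [hprod, prod_odd_split, hcastQ]
  -- numeric facts
  have hQpos : 0 < Qn := Finset.prod_pos fun k _ => by omega
  have hQne : (Qn:ℚ) ≠ 0 := by positivity
  have hnf : ((n.factorial : ℚ)) ≠ 0 := by positivity
  have hfac1 : (Qn:ℚ) * (2^n * (n.factorial:ℚ)) = ((2*n+1).factorial : ℚ) := by
    exact_mod_cast congrArg (Nat.cast : ℕ → ℚ) (podd_fact n)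
  have hfact2 : ((2*n+1).choose n : ℚ) * (n.factorial:ℚ) * (((n:ℚ)+1) * (n.factorial:ℚ))
      = ((2*n+1).factorial : ℚ) := by
    have h := Nat.choose_mul_factorial_mul_factorial (show n ≤ 2*n+1 by omega)
    rw [show 2*n+1-n = n+1 from by omega] at h
    rw [Nat.factorial_succ] at h
    have := congrArg (Nat.cast : ℕ → ℚ) h
    push_cast at this
    linarith [this]
  have hsign : ((-1:ℚ)^(n+1)) * ((-1:ℚ)^(n+1)) = 1 := by
    rw [← pow_add, show (n+1)+(n+1) = 2*(n+1) from by ring, pow_mul]; norm_num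
  have hC : ((2*n+1).choose n : ℚ)
      = ((2*n+1).factorial : ℚ) / (((n:ℚ)+1) * (n.factorial:ℚ) * (n.factorial:ℚ)) := by
    rw [eq_div_iff (by positivity)]
    linarith [hfact2]
  have hQ : (Qn:ℚ) = ((2*n+1).factorial : ℚ) / (2^n * (n.factorial:ℚ)) := by
    rw [eq_div_iff (by positivity)]
    exact hfac1
  rw [hKdef, hC, hQ]
  have hFne : ((2*n+1).factorial : ℚ) ≠ 0 := by positivity
  have hsne : ((-1:ℚ)^(n+1)) ≠ 0 := by
    rcases neg_one_pow_eq_or ℚ (n+1) with h|h <;> rw [h] <;> norm_num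
  have h2 : ((-1:ℚ))^(n*2) = 1 := by rw [mul_comm, pow_mul]; norm_num
  field_simp
  linear_combination (((2*n+1).factorial : ℚ)^2 * 2^(4*n+1) * 2^(2*n+2)) * hsign
    - (((2*n+1).factorial : ℚ)^2 * 2^(n*6) * 8) * h2
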